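/- If every point of X except at most two points e₁, e₂ is eventually fixed under f (i.e., some iterate maps it to a fixed point), then X contains no three distinct points forming pairwise DC3 pairs; in fact any DC3 pair must include e₁ or e₂. -/

import Mathlib

open Filter

noncomputable def Phi {α : Type*} (d : α → α → ℝ) (f : α → α) (x y : α) (δ : ℝ) : ℝ :=
  liminf (fun n : ℕ =>
    (((Finset.range (n+1)).filter (fun k => d (f^[k] x) (f^[k] y) < δ)).card : ℝ) / n) atTop

noncomputable def PhiStar {α : Type*} (d : α → α → ℝ) (f : α → α) (x y : α) (δ : ℝ) : ℝ :=
  limsup (fun n : ℕ =>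
    (((Finset.range (n+1)).filter (fun k => d (f^[k] x) (f^[k] y) < δ)).card : ℝ) / n) atTop

open Classical in
noncomputable def shiftDist (x y : ℕ → Bool) : ℝ :=
  if x = y then 0 else (2:ℝ)⁻¹ ^ (sInf {j | x j ≠ y j})

def shift (x : ℕ → Bool) : ℕ → Bool := fun n => x (n+1)

noncomputable def diamX (X : Type*) [MetricSpace X] : ℝ := Metric.diam (Set.univ : Set X)

def DC3pair {X : Type*} [MetricSpace X] (f : X → X) (x y : X) : Prop :=
  ∃ a b : ℝ, 0 ≤ a ∧ a < b ∧
    ∀ δ ∈ Set.Ioo a b, Phi dist f x y δ < PhiStar dist f x y δ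

lemma phi_eq_of_tendsto {X : Type*} [MetricSpace X] (f : X → X) (x y : X) (L : ℝ)
    (h : Tendsto (fun n : ℕ => dist (f^[n] x) (f^[n] y)) atTop (nhds L))
    (δ : ℝ) (hδ : δ ≠ L) : Phi dist f x y δ = PhiStar dist f x y δ := by
  set r : ℕ → ℝ := fun n =>
    (((Finset.range (n+1)).filter (fun k => dist (f^[k] x) (f^[k] y) < δ)).card : ℝ) / n with hr
  rcases lt_or_gt_of_ne hδ with hlt | hgt
  · -- δ < L : eventually dist > δ, ratio → 0
    obtain ⟨N, hN⟩ := eventually_atTop.1 (h.eventually_const_lt hlt)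
    have h0 : Tendsto r atTop (nhds 0) := by
      apply tendsto_of_tendsto_of_tendsto_of_le_of_le'
        (tendsto_const_nhds : Tendsto (fun _ : ℕ => (0:ℝ)) atTop (nhds 0))
        (tendsto_const_div_atTop_nhds_zero_nat (N:ℝ))
      · exact Eventually.of_forall fun n => by positivity
      · filter_upwards [eventually_ge_atTop (max N 1)] with n hn
        have hnN : N ≤ n := le_trans (le_max_left _ _) hn
        have hn1 : 1 ≤ n := le_trans (le_max_right _ _) hn
        have hn0 : (0:ℝ) < n := by exact_mod_cast hn1
        have hsub : (Finset.range (n+1)).filter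
            (fun k => dist (f^[k] x) (f^[k] y) < δ) ⊆ Finset.range N := by
          intro k hk
          simp only [Finset.mem_filter, Finset.mem_range] at hk ⊢
          by_contra hk'
          exact absurd hk.2 (not_lt.2 (le_of_lt (hN k (not_lt.1 hk'))))
        have hcard := Finset.card_le_card hsub
        simp only [Finset.card_range] at hcard
        rw [hr]; dsimp only
        rw [div_le_div_iff_of_pos_right hn0]
        exact_mod_cast hcard
    unfold Phi PhiStar
    rw [h0.liminf_eq, h0.limsup_eq]
  · -- δ > L : eventually dist < δ, ratio → 1
    obtain ⟨N, hN⟩ := eventually_atTop.1 (h.eventually_lt_const hgt)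
    have h1 : Tendsto r atTop (nhds 1) := by
      have hlow : Tendsto (fun n : ℕ => 1 - (N:ℝ)/n) atTop (nhds 1) := by
        have := (tendsto_const_nhds : Tendsto (fun _ : ℕ => (1:ℝ)) atTop (nhds 1)).sub
          (tendsto_const_div_atTop_nhds_zero_nat (N:ℝ))
        simpa using this
      have hup : Tendsto (fun n : ℕ => ((n:ℝ)+1)/n) atTop (nhds 1) := by
        have := (tendsto_const_nhds : Tendsto (fun _ : ℕ => (1:ℝ)) atTop (nhds 1)).add
          (tendsto_const_div_atTop_nhds_zero_nat 1)
        have h2 : Tendsto (fun n : ℕ => 1 + (1:ℝ)/n) atTop (nhds 1) := by simpa using this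
        apply h2.congr'
        filter_upwards [eventually_gt_atTop 0] with n hn
        have : (n:ℝ) ≠ 0 := Nat.cast_ne_zero.2 hn.ne'
        field_simp
      apply tendsto_of_tendsto_of_tendsto_of_le_of_le' hlow hup
      · filter_upwards [eventually_ge_atTop (max N 1)] with n hn
        have hnN : N ≤ n := le_trans (le_max_left _ _) hn
        have hn1 : 1 ≤ n := le_trans (le_max_right _ _) hn
        have hsub : Finset.Icc N n ⊆ (Finset.range (n+1)).filter
            (fun k => dist (f^[k] x) (f^[k] y) < δ) := by
          intro k hk
          simp only [Finset.mem_Icc] at hk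
          simp only [Finset.mem_filter, Finset.mem_range]
          exact ⟨Nat.lt_succ_of_le hk.2, hN k hk.1⟩
        have hcard := Finset.card_le_card hsub
        rw [Nat.card_Icc] at hcard
        have hcast : ((n:ℝ) - N) ≤ (((Finset.range (n+1)).filter
            (fun k => dist (f^[k] x) (f^[k] y) < δ)).card : ℝ) := by
          calc ((n:ℝ) - N) ≤ ((n + 1 - N : ℕ) : ℝ) := by
                rw [Nat.cast_sub (by omega)]
                push_cast; linarith
            _ ≤ _ := Nat.cast_le.2 hcard
        have hn0 : (0:ℝ) < n := by exact_mod_cast hn1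
        rw [hr]; dsimp only
        rw [le_div_iff₀ hn0]
        have hexp : (1 - (N:ℝ)/n) * n = (n:ℝ) - N := by field_simp
        rw [hexp]
        exact hcast
      · filter_upwards [eventually_ge_atTop 1] with n hn1
        have hn0 : (0:ℝ) < n := by exact_mod_cast hn1
        rw [hr]; dsimp only
        rw [div_le_div_iff_of_pos_right hn0]
        have := Finset.card_filter_le (Finset.range (n+1)) (fun k => dist (f^[k] x) (f^[k] y) < δ)
        rw [Finset.card_range] at this
        exact_mod_cast this
    unfold Phi PhiStar
    rw [h1.liminf_eq, h1.limsup_eq]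

lemma notDC3_of_tendsto {X : Type*} [MetricSpace X] (f : X → X) (x y : X)
    (h : ∃ L : ℝ, Tendsto (fun n : ℕ => dist (f^[n] x) (f^[n] y)) atTop (nhds L)) :
    ¬ DC3pair f x y := by
  rintro ⟨a, b, ha, hab, hd⟩
  obtain ⟨L, hL⟩ := h
  set δ₁ := (2*a+b)/3
  set δ₂ := (a+2*b)/3
  have h₁ : δ₁ ∈ Set.Ioo a b := ⟨by simp only [δ₁]; linarith, by simp only [δ₁]; linarith⟩
  have h₂ : δ₂ ∈ Set.Ioo a b := ⟨by simp only [δ₂]; linarith, by simp only [δ₂]; linarith⟩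
  have hne : δ₁ ≠ δ₂ := by simp only [δ₁, δ₂]; intro hh; nlinarith [hh]
  rcases eq_or_ne δ₁ L with rfl | hd1
  · exact absurd (phi_eq_of_tendsto f x y _ hL δ₂ (fun hh => hne hh.symm)) (ne_of_lt (hd δ₂ h₂))
  · exact absurd (phi_eq_of_tendsto f x y _ hL δ₁ hd1) (ne_of_lt (hd δ₁ h₁))

theorem stmt13 {X : Type*} [MetricSpace X] [CompactSpace X] (f : X → X) (hf : Continuous f)
    (e₁ e₂ : X)
    (hev : ∀ x : X, x ≠ e₁ → x ≠ e₂ → ∃ m : ℕ, f (f^[m] x) = f^[m] x)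
    (hlim : ∀ x y : X, (∃ m : ℕ, f (f^[m] x) = f^[m] x) → (∃ m : ℕ, f (f^[m] y) = f^[m] y) →
      ∃ L : ℝ, Filter.Tendsto (fun n : ℕ => dist (f^[n] x) (f^[n] y)) atTop (nhds L)) :
    (¬ ∃ x y z : X, x ≠ y ∧ y ≠ z ∧ x ≠ z ∧
        DC3pair f x y ∧ DC3pair f y z ∧ DC3pair f x z) ∧
    (∀ x y : X, DC3pair f x y → x = e₁ ∨ x = e₂ ∨ y = e₁ ∨ y = e₂) := by
  -- Part 2
  have part2 : ∀ x y : X, DC3pair f x y → x = e₁ ∨ x = e₂ ∨ y = e₁ ∨ y = e₂ := by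
    intro x y hd
    by_contra hc
    push_neg at hc
    obtain ⟨h1, h2, h3, h4⟩ := hc
    exact notDC3_of_tendsto f x y (hlim x y (hev x h1 h2) (hev y h3 h4)) hd
  -- e₁, e₂ are either both eventually fixed, or form a 2-cycle
  have hE : ((∃ m : ℕ, f (f^[m] e₁) = f^[m] e₁) ∧ (∃ m : ℕ, f (f^[m] e₂) = f^[m] e₂)) ∨
      (f e₁ = e₂ ∧ f e₂ = e₁) := by
    have step : ∀ p q : X, p = e₁ ∨ p = e₂ → ¬(∃ m : ℕ, f (f^[m] p) = f^[m] p) →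
        f p ≠ p → f p ≠ e₁ → f p ≠ e₂ → False := by
      intro p q hp hnp hne h1 h2
      obtain ⟨m, hm⟩ := hev (f p) h1 h2
      exact hnp ⟨m + 1, by simpa [Function.iterate_succ_apply] using hm⟩
    have chain : ∀ p : X, p = e₁ ∨ p = e₂ → ¬(∃ m : ℕ, f (f^[m] p) = f^[m] p) →
        f p ≠ p ∧ (f p = e₁ ∨ f p = e₂) := by
      intro p hp hnp
      have hne : f p ≠ p := fun h => hnp ⟨0, by simpa using h⟩
      refine ⟨hne, ?_⟩
      by_contra hc
      push_neg at hc
      exact step p p hp hnp hne hc.1 hc.2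
    by_cases h1 : ∃ m : ℕ, f (f^[m] e₁) = f^[m] e₁
    · by_cases h2 : ∃ m : ℕ, f (f^[m] e₂) = f^[m] e₂
      · exact Or.inl ⟨h1, h2⟩
      · obtain ⟨hne, hor⟩ := chain e₂ (Or.inr rfl) h2
        rcases hor with h | h
        · -- f e₂ = e₁, so e₂ is eventually fixed from h1
          obtain ⟨m, hm⟩ := h1
          exact absurd ⟨m + 1, by
            simp only [Function.iterate_succ_apply, h]; exact hm⟩ h2
        · exact absurd h hne
    · obtain ⟨hne1, hor1⟩ := chain e₁ (Or.inl rfl) h1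
      rcases hor1 with h | h
      · exact absurd h hne1
      · -- f e₁ = e₂
        by_cases h2 : ∃ m : ℕ, f (f^[m] e₂) = f^[m] e₂
        · obtain ⟨m, hm⟩ := h2
          exact absurd ⟨m + 1, by
            simp only [Function.iterate_succ_apply, h]; exact hm⟩ h1
        · obtain ⟨hne2, hor2⟩ := chain e₂ (Or.inr rfl) h2
          rcases hor2 with h' | h'
          · exact Or.inr ⟨h, h'⟩
          · exact absurd h' hne2
  -- (e₁, e₂) is not a DC3 pair
  have ne12 : ¬ DC3pair f e₁ e₂ := by
    rcases hE with ⟨h1, h2⟩ | ⟨h1, h2⟩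
    · exact notDC3_of_tendsto f e₁ e₂ (hlim e₁ e₂ h1 h2)
    · apply notDC3_of_tendsto f e₁ e₂
      refine ⟨dist e₁ e₂, ?_⟩
      have key : ∀ n : ℕ, (f^[n] e₁ = e₁ ∧ f^[n] e₂ = e₂) ∨ (f^[n] e₁ = e₂ ∧ f^[n] e₂ = e₁) := by
        intro n
        induction n with
        | zero => exact Or.inl ⟨rfl, rfl⟩
        | succ k ih =>
          rcases ih with ⟨hk1, hk2⟩ | ⟨hk1, hk2⟩
          · exact Or.inr ⟨by rw [Function.iterate_succ_apply', hk1, h1],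
              by rw [Function.iterate_succ_apply', hk2, h2]⟩
          · exact Or.inl ⟨by rw [Function.iterate_succ_apply', hk1, h2],
              by rw [Function.iterate_succ_apply', hk2, h1]⟩
      have : ∀ n : ℕ, dist (f^[n] e₁) (f^[n] e₂) = dist e₁ e₂ := by
        intro n
        rcases key n with ⟨hk1, hk2⟩ | ⟨hk1, hk2⟩
        · rw [hk1, hk2]
        · rw [hk1, hk2, dist_comm]
      rw [funext this]
      exact tendsto_const_nhds
  -- DC3 is symmetric
  have hsym : ∀ a b : X, DC3pair f a b → DC3pair f b a := by
    intro a b ⟨u, v, hu, huv, hd⟩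
    refine ⟨u, v, hu, huv, fun δ hδ => ?_⟩
    have hPhi : Phi dist f b a δ = Phi dist f a b δ := by
      unfold Phi; simp only [dist_comm]
    have hPhiS : PhiStar dist f b a δ = PhiStar dist f a b δ := by
      unfold PhiStar; simp only [dist_comm]
    rw [hPhi, hPhiS]
    exact hd δ hδ
  have hne12' : ∀ a b : X, (a = e₁ ∨ a = e₂) → (b = e₁ ∨ b = e₂) → a ≠ b →
      ¬ DC3pair f a b := by
    rintro a b (rfl | rfl) (rfl | rfl) hab hd
    · exact hab rfl
    · exact ne12 hd
    · exact ne12 (hsym _ _ hd)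
    · exact hab rfl
  constructor
  · rintro ⟨x, y, z, hxy, hyz, hxz, d1, d2, d3⟩
    have hE' : ∀ a b : X, DC3pair f a b → (a = e₁ ∨ a = e₂) ∨ (b = e₁ ∨ b = e₂) := by
      intro a b hd
      rcases part2 a b hd with h | h | h | h
      · exact Or.inl (Or.inl h)
      · exact Or.inl (Or.inr h)
      · exact Or.inr (Or.inl h)
      · exact Or.inr (Or.inr h)
    rcases hE' x y d1 with hx | hy
    · rcases hE' y z d2 with hy | hz
      · exact hne12' x y hx hy hxy d1
      · exact hne12' x z hx hz hxz d3
    · rcases hE' x z d3 with hx | hz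
      · exact hne12' x y hx hy hxy d1
      · exact hne12' y z hy hz hyz d2
  · exact part2
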